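/- Let T be a finite connected multigraph with edges labeled positive or negative, and η(t) the number of positive minus the number of negative edges of a spanning tree t. If a positive edge e of T lies in some cycle consisting entirely of positive edges, then there exists a spanning tree t maximizing η with e ∉ t. -/

import Mathlib

/-- A finite multigraph: vertex type `V`, edge type `E`, each edge has an
unordered pair of endpoints (loops and parallel edges are allowed). -/
structure Multigraph where
  V : Type
  E : Type
  fV : Fintype V
  fE : Fintype E
  dV : DecidableEq V
  dE : DecidableEq E
  ends : E → Sym2 V

attribute [instance] Multigraph.fV Multigraph.fE Multigraph.dV Multigraph.dE

namespace Multigraph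

variable (G : Multigraph)

/-- `u` and `v` are joined by an edge of the edge set `S`. -/
def adjOn (S : Finset G.E) (u v : G.V) : Prop :=
  ∃ e ∈ S, G.ends e = s(u, v)

/-- `u` and `v` are joined by a walk using only edges of `S`. -/
def reach (S : Finset G.E) (u v : G.V) : Prop :=
  Relation.ReflTransGen (G.adjOn S) u v

/-- The spanning subgraph with edge set `S` is connected. -/
def connectedOn (S : Finset G.E) : Prop := ∀ u v : G.V, G.reach S u v

/-- The multigraph is connected. -/
def Connected : Prop := Nonempty G.V ∧ G.connectedOn Finset.univ

/-- The subgraph with edge set `S` contains no cycle: no edge of `S` has its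
endpoints joined within `S` minus that edge. -/
def acyclicOn (S : Finset G.E) : Prop :=
  ∀ e ∈ S, ∀ u v : G.V, G.ends e = s(u, v) → ¬ G.reach (S.erase e) u v

/-- `S` is the edge set of a spanning tree: connected and acyclic spanning
subgraph. -/
def IsSpanningTree (S : Finset G.E) : Prop :=
  G.connectedOn S ∧ G.acyclicOn S

/-- the edge `e` lies in a cycle all of whose edges belong to `S`. -/
def InCycleOn (S : Finset G.E) (e : G.E) : Prop :=
  e ∈ S ∧ ∃ u v : G.V, G.ends e = s(u, v) ∧ G.reach (S.erase e) u v

/-- the positive edges, for a sign labelling (`true` = positive). -/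
def posEdges (sign : G.E → Bool) : Finset G.E :=
  Finset.univ.filter fun e => sign e = true

/-- the negative edges. -/
def negEdges (sign : G.E → Bool) : Finset G.E :=
  Finset.univ.filter fun e => sign e = false

/-- `e` lies in a cycle consisting entirely of positive edges. -/
def InPositiveCycle (sign : G.E → Bool) (e : G.E) : Prop :=
  G.InCycleOn (G.posEdges sign) e

/-- `e` lies in a cycle consisting entirely of negative edges. -/
def InNegativeCycle (sign : G.E → Bool) (e : G.E) : Prop :=
  G.InCycleOn (G.negEdges sign) e

/-- `η(t)` = (# positive edges of `t`) − (# negative edges of `t`). -/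
def eta (sign : G.E → Bool) (t : Finset G.E) : ℤ :=
  ((t.filter fun e => sign e = true).card : ℤ) -
    (t.filter fun e => sign e = false).card

/-- `S` contains a cycle. -/
def Dependent (S : Finset G.E) : Prop := ¬ G.acyclicOn S

/-- `C` is (the edge set of) a cycle: a minimal dependent set. -/
def IsCircuit (C : Finset G.E) : Prop :=
  G.Dependent C ∧ ∀ C' ⊂ C, G.acyclicOn C'

/-- the set of values of `η` on spanning trees. -/
def etaSet (sign : G.E → Bool) : Set ℤ :=
  {x | ∃ t : Finset G.E, G.IsSpanningTree t ∧ G.eta sign t = x}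

end Multigraph

namespace Multigraph

variable (G : Multigraph)

lemma adjOn_symm' {S : Finset G.E} {u v : G.V} (h : G.adjOn S u v) : G.adjOn S v u := by
  obtain ⟨e, he, h⟩ := h
  exact ⟨e, he, h.trans (Sym2.eq_swap)⟩

lemma reach_symm' {S : Finset G.E} {u v : G.V} (h : G.reach S u v) : G.reach S v u := by
  induction h with
  | refl => exact .refl
  | tail _ hbc ih => exact Relation.ReflTransGen.head (G.adjOn_symm' hbc) ih

lemma reach_mono' {S S' : Finset G.E} (hS : S ⊆ S') {u v : G.V} (h : G.reach S u v) :
    G.reach S' u v := by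
  induction h with
  | refl => exact .refl
  | tail _ hbc ih => exact ih.tail (by obtain ⟨e, he, h⟩ := hbc; exact ⟨e, hS he, h⟩)

/-- propagation of an invariant along a walk -/
lemma reach_propagate {S : Finset G.E} {Q : G.V → Prop} {u v : G.V} (h : G.reach S u v)
    (hu : Q u) (step : ∀ x y, G.adjOn S x y → Q x → Q y) : Q v := by
  induction h with
  | refl => exact hu
  | tail _ hbc ih => exact step _ _ hbc ih

/-- detour lemma: removing an edge whose endpoints remain connected keeps reach -/
lemma reach_erase_of_detour {S : Finset G.E} {e : G.E} {u v : G.V}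
    (hb : G.reach (S.erase e) u v) (hev : G.ends e = s(u, v)) {a b : G.V}
    (h : G.reach S a b) : G.reach (S.erase e) a b := by
  induction h with
  | refl => exact .refl
  | tail _ hbc ih =>
    obtain ⟨f, hf, hfe⟩ := hbc
    by_cases hfe' : f = e
    · subst hfe'
      rcases (Sym2.eq_iff.1 (hev.symm.trans hfe)) with ⟨rfl, rfl⟩ | ⟨rfl, rfl⟩
      · exact ih.trans hb
      · exact ih.trans (G.reach_symm' hb)
    · exact ih.tail ⟨f, Finset.mem_erase.2 ⟨hfe', hf⟩, hfe⟩

/-- every vertex reaches one of the two endpoints of a removed edge -/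
lemma reach_erase_dichotomy {S : Finset G.E} {e : G.E} {u v : G.V}
    (hev : G.ends e = s(u, v)) (w : G.V) (h : G.reach S w u) :
    G.reach (S.erase e) w u ∨ G.reach (S.erase e) w v := by
  induction h using Relation.ReflTransGen.head_induction_on with
  | refl => exact Or.inl .refl
  | head hac _ ih =>
    obtain ⟨f, hf, hfe⟩ := hac
    by_cases hfe' : f = e
    · subst hfe'
      rcases (Sym2.eq_iff.1 (hfe.symm.trans hev)) with ⟨rfl, rfl⟩ | ⟨rfl, rfl⟩
      · exact Or.inl .refl
      · exact Or.inr .refl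
    · have hadj : G.adjOn (S.erase e) _ _ := ⟨f, Finset.mem_erase.2 ⟨hfe', hf⟩, hfe⟩
      rcases ih with h | h
      · exact Or.inl (Relation.ReflTransGen.head hadj h)
      · exact Or.inr (Relation.ReflTransGen.head hadj h)

/-- decomposing a walk that may use one extra edge -/
lemma reach_insert_cases {S : Finset G.E} {f : G.E} {x y : G.V}
    (hf : G.ends f = s(x, y)) {a b : G.V} (h : G.reach (insert f S) a b) :
    G.reach S a b ∨ (G.reach S a x ∧ G.reach S y b) ∨ (G.reach S a y ∧ G.reach S x b) := by
  induction h using Relation.ReflTransGen.head_induction_on with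
  | refl => exact Or.inl .refl
  | head hac _ ih =>
    obtain ⟨g, hg, hge⟩ := hac
    rcases Finset.mem_insert.1 hg with rfl | hgS
    · rcases (Sym2.eq_iff.1 (hge.symm.trans hf)) with ⟨rfl, rfl⟩ | ⟨rfl, rfl⟩
      · rcases ih with h | ⟨h1, h2⟩ | ⟨_, h2⟩
        · exact Or.inr (Or.inl ⟨.refl, h⟩)
        · exact Or.inr (Or.inl ⟨.refl, h2⟩)
        · exact Or.inl h2
      · rcases ih with h | ⟨_, h2⟩ | ⟨h1, h2⟩
        · exact Or.inr (Or.inr ⟨.refl, h⟩)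
        · exact Or.inl h2
        · exact Or.inr (Or.inr ⟨.refl, h2⟩)
    · have hstep : G.reach S _ _ := .single ⟨g, hgS, hge⟩
      rcases ih with h | ⟨h1, h2⟩ | ⟨h1, h2⟩
      · exact Or.inl (hstep.trans h)
      · exact Or.inr (Or.inl ⟨hstep.trans h1, h2⟩)
      · exact Or.inr (Or.inr ⟨hstep.trans h1, h2⟩)

/-- a connected edge set contains a spanning tree -/
lemma exists_spanningTree_subset (S : Finset G.E) (hS : G.connectedOn S) :
    ∃ t ⊆ S, G.IsSpanningTree t := by
  revert hS
  induction S using Finset.strongInduction with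
  | _ S ih =>
    intro hS
    by_cases hA : G.acyclicOn S
    · exact ⟨S, subset_rfl, hS, hA⟩
    · rw [acyclicOn] at hA
      push_neg at hA
      obtain ⟨e, he, u, v, hev, hr⟩ := hA
      have hconn' : G.connectedOn (S.erase e) :=
        fun a b => G.reach_erase_of_detour hr hev (hS a b)
      obtain ⟨t, ht, hst⟩ := ih (S.erase e) (Finset.erase_ssubset he) hconn'
      exact ⟨t, ht.trans (Finset.erase_subset _ _), hst⟩

end Multigraph

/-- If a positive edge lies in an all-positive cycle, then some
`η`-maximizing spanning tree avoids it. -/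
theorem stmt2 (G : Multigraph) (hconn : G.Connected) (sign : G.E → Bool)
    (e : G.E) (he : sign e = true) (hc : G.InPositiveCycle sign e) :
    ∃ t : Finset G.E, G.IsSpanningTree t ∧
      (∀ t' : Finset G.E, G.IsSpanningTree t' → G.eta sign t' ≤ G.eta sign t) ∧
      e ∉ t := by
  classical
  obtain ⟨-, hconnU⟩ := hconn
  obtain ⟨t0, -, ht0⟩ := G.exists_spanningTree_subset Finset.univ hconnU
  -- pick an η-maximizing spanning tree t
  let F : Finset (Finset G.E) := Finset.univ.filter fun t => G.IsSpanningTree t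
  have hF0 : t0 ∈ F := Finset.mem_filter.2 ⟨Finset.mem_univ _, ht0⟩
  obtain ⟨t, htF, hmaxF⟩ := F.exists_max_image (G.eta sign) ⟨t0, hF0⟩
  have ht : G.IsSpanningTree t := (Finset.mem_filter.1 htF).2
  have hmax : ∀ t' : Finset G.E, G.IsSpanningTree t' → G.eta sign t' ≤ G.eta sign t :=
    fun t' ht' => hmaxF t' (Finset.mem_filter.2 ⟨Finset.mem_univ _, ht'⟩)
  by_cases het : e ∈ t
  · -- exchange argument
    obtain ⟨hePos, u, v, hev, hr⟩ := hc
    set Q : G.V → Prop := fun w => G.reach (t.erase e) u w with hQ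
    have hQu : Q u := .refl
    have hQv : ¬ Q v := ht.2 e het u v hev
    have hcross : ¬ ∀ x y, G.adjOn ((G.posEdges sign).erase e) x y → Q x → Q y :=
      fun h => hQv (G.reach_propagate hr hQu h)
    push_neg at hcross
    obtain ⟨x, y, hxy, hQx, hQy⟩ := hcross
    obtain ⟨f, hfP, hfxy⟩ := hxy
    have hfe : f ≠ e := (Finset.mem_erase.1 hfP).1
    have hfpos : sign f = true := (Finset.mem_filter.1 (Finset.mem_erase.1 hfP).2).2
    have hft : f ∉ t := by
      intro hft
      exact hQy (hQx.tail ⟨f, Finset.mem_erase.2 ⟨hfe, hft⟩, hfxy⟩)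
    have hfte : f ∉ t.erase e := fun h => hft (Finset.mem_of_mem_erase h)
    -- y is connected to v in t.erase e
    have hyv : G.reach (t.erase e) y v := by
      rcases G.reach_erase_dichotomy hev y (ht.1 y u) with h | h
      · exact absurd (G.reach_symm' h) hQy
      · exact h
    set t' : Finset G.E := insert f (t.erase e) with ht'def
    have hsub : t.erase e ⊆ t' := Finset.subset_insert _ _
    have het' : e ∉ t' := by
      simp only [ht'def, Finset.mem_insert]
      rintro (rfl | h)
      · exact hfe rfl
      · exact (Finset.mem_erase.1 h).1 rfl
    -- connectivity of t'
    have huv' : G.reach t' u v :=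
      ((G.reach_mono' hsub hQx).tail
        ⟨f, Finset.mem_insert_self _ _, hfxy⟩).trans (G.reach_mono' hsub hyv)
    have hconn' : G.connectedOn t' := by
      intro a b
      have ha := G.reach_erase_dichotomy hev a (ht.1 a u)
      have hb := G.reach_erase_dichotomy hev b (ht.1 b u)
      have hua : G.reach t' u a := by
        rcases ha with h | h
        · exact G.reach_symm' (G.reach_mono' hsub h)
        · exact huv'.trans (G.reach_symm' (G.reach_mono' hsub h))
      have hub : G.reach t' u b := by
        rcases hb with h | h
        · exact G.reach_symm' (G.reach_mono' hsub h)
        · exact huv'.trans (G.reach_symm' (G.reach_mono' hsub h))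
      exact (G.reach_symm' hua).trans hub
    -- acyclicity of t'
    have hacyc' : G.acyclicOn t' := by
      intro g hg a b hgab hreach
      rcases Finset.mem_insert.1 hg with rfl | hgte
      · -- g = f
        rw [ht'def, Finset.erase_insert hfte] at hreach
        have hxy' : G.reach (t.erase e) x y := by
          rcases Sym2.eq_iff.1 (hgab.symm.trans hfxy) with ⟨rfl, rfl⟩ | ⟨rfl, rfl⟩
          · exact hreach
          · exact G.reach_symm' hreach
        exact hQy (hQx.trans hxy')
      · -- g ∈ t.erase e
        have hgt : g ∈ t := Finset.mem_of_mem_erase hgte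
        have hgne : g ≠ e := (Finset.mem_erase.1 hgte).1
        have hgnf : g ≠ f := fun h => hfte (h ▸ hgte)
        have hW : t'.erase g = insert f ((t.erase e).erase g) := by
          rw [ht'def, Finset.erase_insert_of_ne (Ne.symm hgnf)]
        rw [hW] at hreach
        have hWte : (t.erase e).erase g ⊆ t.erase e := Finset.erase_subset _ _
        have hWtg : (t.erase e).erase g ⊆ t.erase g := by
          rw [Finset.erase_right_comm]
          exact Finset.erase_subset _ _
        have hedge : G.reach (t.erase e) a b :=
          .single ⟨g, hgte, hgab⟩
        rcases G.reach_insert_cases hfxy hreach with h | ⟨h1, h2⟩ | ⟨h1, h2⟩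
        · exact ht.2 g hgt a b hgab (G.reach_mono' hWtg h)
        · -- path a→x, y→b within t.erase e minus g
          have : G.reach (t.erase e) u v :=
            (((hQx.trans (G.reach_symm' (G.reach_mono' hWte h1))).trans hedge).trans
              (G.reach_symm' (G.reach_mono' hWte h2))).trans hyv
          exact hQv this
        · -- path a→y, x→b within t.erase e minus g
          have : G.reach (t.erase e) u v :=
            (((hQx.trans (G.reach_mono' hWte h2)).trans (G.reach_symm' hedge)).trans
              (G.reach_mono' hWte h1)).trans hyv
          exact hQv this
    -- eta is unchanged
    have heta : G.eta sign t' = G.eta sign t := by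
      have hepos : e ∈ t.filter fun e => sign e = true := Finset.mem_filter.2 ⟨het, he⟩
      have hfnt : f ∉ (t.filter fun e => sign e = true).erase e := by
        intro h
        exact hft (Finset.mem_of_mem_filter _ (Finset.mem_of_mem_erase h))
      have h1 : t'.filter (fun e => sign e = true) =
          insert f ((t.filter fun e => sign e = true).erase e) := by
        rw [ht'def, Finset.filter_insert, if_pos hfpos, Finset.filter_erase]
      have h2 : t'.filter (fun e => sign e = false) = t.filter fun e => sign e = false := by
        rw [ht'def, Finset.filter_insert, if_neg (by simp [hfpos]), Finset.filter_erase,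
          Finset.erase_eq_of_notMem]
        intro h
        rw [(Finset.mem_filter.1 h).2] at he
        exact absurd he (by simp)
      simp only [Multigraph.eta]
      rw [h1, h2, Finset.card_insert_of_notMem hfnt,
        Finset.card_erase_of_mem hepos]
      have : 1 ≤ (t.filter fun e => sign e = true).card := Finset.card_pos.2 ⟨e, hepos⟩
      push_cast [Nat.sub_add_cancel this]
      ring
    exact ⟨t', ⟨hconn', hacyc'⟩, fun t'' ht'' => heta ▸ hmax t'' ht'', het'⟩
  · exact ⟨t, ht, hmax, het⟩
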